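/- arXiv:1901.07476 — 2 statements merged into one kernel-verified Lean document; each statement's English description precedes it below -/
import Mathlib

section
/- (Copy Lemma) For every triple of jointly distributed random variables (X,Y,Z) taking finitely many values, there exists a quadruple of jointly distributed random variables (A,B,C,C') taking finitely many values such that: the joint distribution of (A,B,C) coincides with that of (X,Y,Z); the joint distribution of (A,C') coincides with that of (X,Z); and I(C'; B,C | A) = 0. -/
open scoped Classical
set_option linter.unusedSectionVars false

/-- Shannon entropy (natural-log base) of a random variable `X` defined on a finite
probability space `(Ω, p)` and taking values in a finite type `α`. -/
noncomputable def ent {Ω α : Type*} [Fintype Ω] [Fintype α] (p : Ω → ℝ) (X : Ω → α) : ℝ :=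
  ∑ a : α, Real.negMulLog (∑ ω : Ω, if X ω = a then p ω else 0)

/-- Probability that the random variable `X` takes the value `a`. -/
noncomputable def distOf {Ω α : Type*} [Fintype Ω] (p : Ω → ℝ) (X : Ω → α) (a : α) : ℝ :=
  ∑ ω : Ω, if X ω = a then p ω else 0

lemma cl_marg {Ω α β : Type*} [Fintype Ω] [Fintype β] (p : Ω → ℝ)
    (F : Ω → α) (G : Ω → β) (a : α) :
    ∑ b : β, distOf p (fun ω => (F ω, G ω)) (a, b) = distOf p F a := by
  unfold distOf
  rw [Finset.sum_comm]
  refine Finset.sum_congr rfl fun ω _ => ?_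
  by_cases h : F ω = a <;> simp [h, Prod.ext_iff]

lemma cl_distOf_nonneg {Ω α : Type*} [Fintype Ω] (p : Ω → ℝ) (hp : ∀ ω, 0 ≤ p ω)
    (F : Ω → α) (a : α) : 0 ≤ distOf p F a := by
  refine Finset.sum_nonneg fun ω _ => ?_
  split <;> simp [hp ω]

lemma cl_distOf_le {Ω α β : Type*} [Fintype Ω] (p : Ω → ℝ) (hp : ∀ ω, 0 ≤ p ω)
    (F : Ω → α) (G : Ω → β) (a : α) (b : β) :
    distOf p (fun ω => (F ω, G ω)) (a, b) ≤ distOf p F a := by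
  refine Finset.sum_le_sum fun ω _ => ?_
  split_ifs with h1 h2
  · exact le_refl _
  · exact absurd (Prod.ext_iff.mp h1).1 h2
  · exact hp ω
  · exact le_refl _

lemma cl_negMulLog_mul (a b : ℝ) :
    Real.negMulLog (a * b) = b * Real.negMulLog a + a * Real.negMulLog b := by
  rcases eq_or_ne a 0 with ha | ha
  · simp [ha]
  rcases eq_or_ne b 0 with hb | hb
  · simp [hb]
  simp only [Real.negMulLog, Real.log_mul ha hb]
  ring

lemma cl_negMulLog_div (s t : ℝ) (ht : t ≠ 0) :
    t * Real.negMulLog (s / t) = Real.negMulLog s + s * Real.log t := by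
  rcases eq_or_ne s 0 with hs | hs
  · simp [hs]
  simp only [Real.negMulLog, Real.log_div hs ht]
  field_simp
  ring


section CL
variable {Ω 𝒳 𝒴 𝒵 : Type*} [Fintype Ω] [Fintype 𝒳] [Fintype 𝒴] [Fintype 𝒵]

noncomputable def clT (p : Ω → ℝ) (X : Ω → 𝒳) (x : 𝒳) : ℝ := distOf p X x
noncomputable def clR (p : Ω → ℝ) (X : Ω → 𝒳) (Y : Ω → 𝒴) (Z : Ω → 𝒵) (x : 𝒳) (y : 𝒴) (z : 𝒵) : ℝ :=
  distOf p (fun ω => (X ω, Y ω, Z ω)) (x, y, z)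
noncomputable def clS (p : Ω → ℝ) (X : Ω → 𝒳) (Z : Ω → 𝒵) (x : 𝒳) (z' : 𝒵) : ℝ :=
  distOf p (fun ω => (X ω, Z ω)) (x, z')
noncomputable def clQ (p : Ω → ℝ) (X : Ω → 𝒳) (Y : Ω → 𝒴) (Z : Ω → 𝒵) (x : 𝒳) (y : 𝒴) (z z' : 𝒵) : ℝ :=
  if clT p X x = 0 then 0 else clR p X Y Z x y z * clS p X Z x z' / clT p X x

variable (p : Ω → ℝ) (X : Ω → 𝒳) (Y : Ω → 𝒴) (Z : Ω → 𝒵)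

lemma clR_marg (x : 𝒳) : ∑ y, ∑ z, clR p X Y Z x y z = clT p X x := by
  have := cl_marg p X (fun ω => (Y ω, Z ω)) x
  rw [Fintype.sum_prod_type] at this
  simpa [clR, clT] using this

lemma clS_marg (x : 𝒳) : ∑ z', clS p X Z x z' = clT p X x :=
  cl_marg p X Z x

variable (hp : ∀ ω, 0 ≤ p ω)
include hp

lemma clR_zero {x : 𝒳} (h : clT p X x = 0) (y : 𝒴) (z : 𝒵) : clR p X Y Z x y z = 0 := by
  have h1 : clR p X Y Z x y z ≤ clT p X x := by
    have := cl_distOf_le p hp X (fun ω => (Y ω, Z ω)) x (y, z)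
    simpa [clR, clT] using this
  have h2 : 0 ≤ clR p X Y Z x y z := cl_distOf_nonneg p hp _ _
  linarith [h ▸ h1]

lemma clS_zero {x : 𝒳} (h : clT p X x = 0) (z' : 𝒵) : clS p X Z x z' = 0 := by
  have h1 : clS p X Z x z' ≤ clT p X x := cl_distOf_le p hp X Z x z'
  have h2 : 0 ≤ clS p X Z x z' := cl_distOf_nonneg p hp _ _
  linarith [h ▸ h1]

lemma clQ_nonneg (x : 𝒳) (y : 𝒴) (z z' : 𝒵) : 0 ≤ clQ p X Y Z x y z z' := by
  unfold clQ
  split_ifs with h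
  · exact le_refl 0
  · have ht : 0 ≤ clT p X x := cl_distOf_nonneg p hp _ _
    exact div_nonneg (mul_nonneg (cl_distOf_nonneg p hp _ _) (cl_distOf_nonneg p hp _ _)) ht

lemma clQ_sum_z' (x : 𝒳) (y : 𝒴) (z : 𝒵) :
    ∑ z', clQ p X Y Z x y z z' = clR p X Y Z x y z := by
  by_cases h : clT p X x = 0
  · simp [clQ, h, clR_zero p X Y Z hp h]
  · simp only [clQ, if_neg h]
    rw [← Finset.sum_div, ← Finset.mul_sum, clS_marg]
    field_simp

lemma clQ_sum_yz (x : 𝒳) (z' : 𝒵) :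
    ∑ y, ∑ z, clQ p X Y Z x y z z' = clS p X Z x z' := by
  by_cases h : clT p X x = 0
  · simp [clQ, h, clS_zero p X Z hp h]
  · simp only [clQ, if_neg h]
    have : ∀ y, ∑ z, clR p X Y Z x y z * clS p X Z x z' / clT p X x
        = (∑ z, clR p X Y Z x y z) * clS p X Z x z' / clT p X x := by
      intro y; rw [← Finset.sum_div, ← Finset.sum_mul]
    rw [Finset.sum_congr rfl fun y _ => this y, ← Finset.sum_div, ← Finset.sum_mul,
      clR_marg]
    field_simp

lemma clQ_ent (x : 𝒳) :
    ∑ y, ∑ z, ∑ z', Real.negMulLog (clQ p X Y Z x y z z')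
      = (∑ y, ∑ z, Real.negMulLog (clR p X Y Z x y z))
        + (∑ z', Real.negMulLog (clS p X Z x z'))
        - Real.negMulLog (clT p X x) := by
  by_cases h : clT p X x = 0
  · simp [clQ, h, clR_zero p X Y Z hp h, clS_zero p X Z hp h]
  · set K := ∑ z', Real.negMulLog (clS p X Z x z' / clT p X x) with hKdef
    have key : ∀ y z, ∑ z', Real.negMulLog (clQ p X Y Z x y z z')
        = Real.negMulLog (clR p X Y Z x y z) + clR p X Y Z x y z * K := by
      intro y z
      have h1 : ∀ z', Real.negMulLog (clQ p X Y Z x y z z')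
          = (clS p X Z x z' / clT p X x) * Real.negMulLog (clR p X Y Z x y z)
            + clR p X Y Z x y z * Real.negMulLog (clS p X Z x z' / clT p X x) := by
        intro z'
        simp only [clQ, if_neg h, mul_div_assoc]
        rw [cl_negMulLog_mul]
      calc ∑ z', Real.negMulLog (clQ p X Y Z x y z z')
          = ∑ z', ((clS p X Z x z' / clT p X x) * Real.negMulLog (clR p X Y Z x y z)
            + clR p X Y Z x y z * Real.negMulLog (clS p X Z x z' / clT p X x)) :=
            Finset.sum_congr rfl fun z' _ => h1 z'
        _ = (∑ z', clS p X Z x z' / clT p X x) * Real.negMulLog (clR p X Y Z x y z)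
            + clR p X Y Z x y z * K := by
            rw [Finset.sum_add_distrib, ← Finset.sum_mul, ← Finset.mul_sum]
        _ = _ := by
            rw [← Finset.sum_div, clS_marg, div_self h, one_mul]
    have hK : clT p X x * K
        = (∑ z', Real.negMulLog (clS p X Z x z')) + clT p X x * Real.log (clT p X x) := by
      rw [hKdef, Finset.mul_sum]
      calc ∑ z', clT p X x * Real.negMulLog (clS p X Z x z' / clT p X x)
          = ∑ z', (Real.negMulLog (clS p X Z x z') + clS p X Z x z' * Real.log (clT p X x)) :=
            Finset.sum_congr rfl fun z' _ => cl_negMulLog_div _ _ h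
        _ = (∑ z', Real.negMulLog (clS p X Z x z'))
            + (∑ z', clS p X Z x z') * Real.log (clT p X x) := by
            rw [Finset.sum_add_distrib, ← Finset.sum_mul]
        _ = _ := by rw [clS_marg]
    have hsum : ∑ y, ∑ z, ∑ z', Real.negMulLog (clQ p X Y Z x y z z')
        = (∑ y, ∑ z, Real.negMulLog (clR p X Y Z x y z)) + clT p X x * K := by
      have h2 : ∀ y, ∑ z, (Real.negMulLog (clR p X Y Z x y z) + clR p X Y Z x y z * K)
          = (∑ z, Real.negMulLog (clR p X Y Z x y z)) + (∑ z, clR p X Y Z x y z) * K := by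
        intro y; rw [Finset.sum_add_distrib, ← Finset.sum_mul]
      calc ∑ y, ∑ z, ∑ z', Real.negMulLog (clQ p X Y Z x y z z')
          = ∑ y, ((∑ z, Real.negMulLog (clR p X Y Z x y z)) + (∑ z, clR p X Y Z x y z) * K) := by
            refine Finset.sum_congr rfl fun y _ => ?_
            rw [Finset.sum_congr rfl fun z _ => key y z, h2 y]
        _ = (∑ y, ∑ z, Real.negMulLog (clR p X Y Z x y z))
            + (∑ y, ∑ z, clR p X Y Z x y z) * K := by
            rw [Finset.sum_add_distrib, ← Finset.sum_mul]
        _ = _ := by rw [clR_marg]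
    rw [hsum, hK]
    simp only [Real.negMulLog]
    ring

end CL

lemma cl_sum_distOf {Ω α : Type*} [Fintype Ω] [Fintype α] (p : Ω → ℝ) (F : Ω → α) :
    ∑ a : α, distOf p F a = ∑ ω, p ω := by
  unfold distOf
  rw [Finset.sum_comm]
  refine Finset.sum_congr rfl fun ω _ => ?_
  simp

lemma cl_sum3_comm {α β γ : Type*} [Fintype α] [Fintype β] [Fintype γ]
    (f : α → β → γ → ℝ) :
    ∑ b : β, ∑ c : γ, ∑ a : α, f a b c = ∑ a, ∑ b, ∑ c, f a b c := by
  calc ∑ b : β, ∑ c : γ, ∑ a : α, f a b c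
      = ∑ b : β, ∑ a : α, ∑ c : γ, f a b c :=
        Finset.sum_congr rfl fun b _ => Finset.sum_comm
    _ = _ := Finset.sum_comm

lemma cl_sum4_comm {α β γ δ : Type*} [Fintype α] [Fintype β] [Fintype γ] [Fintype δ]
    (f : α → β → γ → δ → ℝ) :
    ∑ d : δ, ∑ b : β, ∑ c : γ, ∑ a : α, f a b c d
      = ∑ a, ∑ b, ∑ c, ∑ d, f a b c d := by
  calc ∑ d : δ, ∑ b : β, ∑ c : γ, ∑ a : α, f a b c d
      = ∑ d : δ, ∑ a : α, ∑ b : β, ∑ c : γ, f a b c d :=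
        Finset.sum_congr rfl fun d _ => cl_sum3_comm _
    _ = ∑ a : α, ∑ d : δ, ∑ b : β, ∑ c : γ, f a b c d := Finset.sum_comm
    _ = ∑ a : α, ∑ b : β, ∑ d : δ, ∑ c : γ, f a b c d :=
        Finset.sum_congr rfl fun a _ => Finset.sum_comm
    _ = _ := Finset.sum_congr rfl fun a _ => Finset.sum_congr rfl fun b _ =>
        Finset.sum_comm

/-- **Copy Lemma.** For every triple of jointly distributed random variables `(X,Y,Z)`
taking finitely many values there exists a quadruple `(A,B,C,C')` of jointly distributed
random variables (taking finitely many values) such that `(A,B,C)` has the same joint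
distribution as `(X,Y,Z)`, `(A,C')` has the same joint distribution as `(X,Z)`, and
`I(C'; B,C | A) = 0`. -/
theorem copy_lemma
    {Ω 𝒳 𝒴 𝒵 : Type*} [Fintype Ω] [Fintype 𝒳] [Fintype 𝒴] [Fintype 𝒵]
    (p : Ω → ℝ) (hp0 : ∀ ω, 0 ≤ p ω) (hp1 : ∑ ω, p ω = 1)
    (X : Ω → 𝒳) (Y : Ω → 𝒴) (Z : Ω → 𝒵) :
    ∃ (m : ℕ) (q : Fin m → ℝ), (∀ ω, 0 ≤ q ω) ∧ (∑ ω, q ω = 1) ∧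
      ∃ (A : Fin m → 𝒳) (B : Fin m → 𝒴) (C C' : Fin m → 𝒵),
        (∀ v : 𝒳 × 𝒴 × 𝒵,
          distOf q (fun ω => (A ω, B ω, C ω)) v = distOf p (fun ω => (X ω, Y ω, Z ω)) v) ∧
        (∀ v : 𝒳 × 𝒵,
          distOf q (fun ω => (A ω, C' ω)) v = distOf p (fun ω => (X ω, Z ω)) v) ∧
        ent q (fun ω => (C' ω, A ω)) + ent q (fun ω => (B ω, C ω, A ω))
          - ent q (fun ω => (C' ω, B ω, C ω, A ω)) - ent q A = 0 := by
  classical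
  set e : Fin (Fintype.card (𝒳 × 𝒴 × 𝒵 × 𝒵)) ≃ (𝒳 × 𝒴 × 𝒵 × 𝒵) :=
    (Fintype.equivFin (𝒳 × 𝒴 × 𝒵 × 𝒵)).symm with he
  refine ⟨Fintype.card (𝒳 × 𝒴 × 𝒵 × 𝒵),
    fun i => clQ p X Y Z (e i).1 (e i).2.1 (e i).2.2.1 (e i).2.2.2,
    fun i => clQ_nonneg p X Y Z hp0 _ _ _ _, ?_,
    fun i => (e i).1, fun i => (e i).2.1, fun i => (e i).2.2.1, fun i => (e i).2.2.2,
    ?_, ?_, ?_⟩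
  · -- total mass one
    have h0 : (∑ i, clQ p X Y Z (e i).1 (e i).2.1 (e i).2.2.1 (e i).2.2.2)
        = ∑ w : 𝒳 × 𝒴 × 𝒵 × 𝒵, clQ p X Y Z w.1 w.2.1 w.2.2.1 w.2.2.2 :=
      Equiv.sum_comp e (fun w => clQ p X Y Z w.1 w.2.1 w.2.2.1 w.2.2.2)
    rw [h0]
    have h1 : ∀ x : 𝒳, ∑ y, ∑ z, ∑ z', clQ p X Y Z x y z z' = clT p X x := by
      intro x
      rw [Finset.sum_congr rfl fun y _ => Finset.sum_congr rfl fun z _ =>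
        clQ_sum_z' p X Y Z hp0 x y z, clR_marg]
    calc ∑ w : 𝒳 × 𝒴 × 𝒵 × 𝒵, clQ p X Y Z w.1 w.2.1 w.2.2.1 w.2.2.2
        = ∑ x, ∑ y, ∑ z, ∑ z', clQ p X Y Z x y z z' := by
          simp [Fintype.sum_prod_type]
      _ = ∑ x, clT p X x := Finset.sum_congr rfl fun x _ => h1 x
      _ = ∑ ω, p ω := cl_sum_distOf p X
      _ = 1 := hp1
  · -- (A,B,C) ~ (X,Y,Z)
    rintro ⟨x, y, z⟩
    simp only [distOf]
    have h0 : (∑ i, if ((e i).1, (e i).2.1, (e i).2.2.1) = (x, y, z)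
        then clQ p X Y Z (e i).1 (e i).2.1 (e i).2.2.1 (e i).2.2.2 else 0)
        = ∑ w : 𝒳 × 𝒴 × 𝒵 × 𝒵, (if (w.1, w.2.1, w.2.2.1) = (x, y, z)
            then clQ p X Y Z w.1 w.2.1 w.2.2.1 w.2.2.2 else 0) :=
      Equiv.sum_comp e (fun w => if (w.1, w.2.1, w.2.2.1) = (x, y, z) then clQ p X Y Z w.1 w.2.1 w.2.2.1 w.2.2.2 else 0)
    rw [h0]
    have h1 : ∑ w : 𝒳 × 𝒴 × 𝒵 × 𝒵, (if (w.1, w.2.1, w.2.2.1) = (x, y, z)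
        then clQ p X Y Z w.1 w.2.1 w.2.2.1 w.2.2.2 else 0) = ∑ z', clQ p X Y Z x y z z' := by
      simp [Fintype.sum_prod_type, Prod.ext_iff, ite_and, Finset.sum_ite_irrel,
        Finset.sum_ite_eq, Finset.sum_ite_eq']
    rw [h1, clQ_sum_z' p X Y Z hp0]
    rfl
  · -- (A,C') ~ (X,Z)
    rintro ⟨x, z'⟩
    simp only [distOf]
    have h0 : (∑ i, if ((e i).1, (e i).2.2.2) = (x, z')
        then clQ p X Y Z (e i).1 (e i).2.1 (e i).2.2.1 (e i).2.2.2 else 0)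
        = ∑ w : 𝒳 × 𝒴 × 𝒵 × 𝒵, (if (w.1, w.2.2.2) = (x, z')
            then clQ p X Y Z w.1 w.2.1 w.2.2.1 w.2.2.2 else 0) :=
      Equiv.sum_comp e (fun w => if (w.1, w.2.2.2) = (x, z') then clQ p X Y Z w.1 w.2.1 w.2.2.1 w.2.2.2 else 0)
    rw [h0]
    have h1 : ∑ w : 𝒳 × 𝒴 × 𝒵 × 𝒵, (if (w.1, w.2.2.2) = (x, z')
        then clQ p X Y Z w.1 w.2.1 w.2.2.1 w.2.2.2 else 0)
        = ∑ y, ∑ z, clQ p X Y Z x y z z' := by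
      simp [Fintype.sum_prod_type, Prod.ext_iff, ite_and, Finset.sum_ite_irrel,
        Finset.sum_ite_eq, Finset.sum_ite_eq']
    rw [h1, clQ_sum_yz p X Y Z hp0]
    rfl
  · -- vanishing conditional mutual information
    have eCA : ent (fun i => clQ p X Y Z (e i).1 (e i).2.1 (e i).2.2.1 (e i).2.2.2)
        (fun i => ((e i).2.2.2, (e i).1))
        = ∑ x, ∑ z', Real.negMulLog (clS p X Z x z') := by
      simp only [ent]
      have h1 : ∀ v : 𝒵 × 𝒳, (∑ i, if ((e i).2.2.2, (e i).1) = v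
          then clQ p X Y Z (e i).1 (e i).2.1 (e i).2.2.1 (e i).2.2.2 else 0)
          = clS p X Z v.2 v.1 := by
        rintro ⟨z', x⟩
        have h0 : (∑ i, if ((e i).2.2.2, (e i).1) = (z', x)
            then clQ p X Y Z (e i).1 (e i).2.1 (e i).2.2.1 (e i).2.2.2 else 0)
            = ∑ w : 𝒳 × 𝒴 × 𝒵 × 𝒵, (if (w.2.2.2, w.1) = (z', x)
                then clQ p X Y Z w.1 w.2.1 w.2.2.1 w.2.2.2 else 0) :=
          Equiv.sum_comp e (fun w => if (w.2.2.2, w.1) = (z', x) then clQ p X Y Z w.1 w.2.1 w.2.2.1 w.2.2.2 else 0)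
        rw [h0]
        have h2 : ∑ w : 𝒳 × 𝒴 × 𝒵 × 𝒵, (if (w.2.2.2, w.1) = (z', x)
            then clQ p X Y Z w.1 w.2.1 w.2.2.1 w.2.2.2 else 0)
            = ∑ y, ∑ z, clQ p X Y Z x y z z' := by
          simp [Fintype.sum_prod_type, Prod.ext_iff, ite_and, Finset.sum_ite_irrel,
            Finset.sum_ite_eq, Finset.sum_ite_eq']
        rw [h2, clQ_sum_yz p X Y Z hp0]
      calc (∑ v : 𝒵 × 𝒳, Real.negMulLog (∑ i, if ((e i).2.2.2, (e i).1) = v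
            then clQ p X Y Z (e i).1 (e i).2.1 (e i).2.2.1 (e i).2.2.2 else 0))
          = ∑ v : 𝒵 × 𝒳, Real.negMulLog (clS p X Z v.2 v.1) :=
            Finset.sum_congr rfl fun v _ => by rw [h1 v]
        _ = ∑ z', ∑ x, Real.negMulLog (clS p X Z x z') := by
            rw [Fintype.sum_prod_type]
        _ = _ := Finset.sum_comm
    have eBCA : ent (fun i => clQ p X Y Z (e i).1 (e i).2.1 (e i).2.2.1 (e i).2.2.2)
        (fun i => ((e i).2.1, (e i).2.2.1, (e i).1))
        = ∑ x, ∑ y, ∑ z, Real.negMulLog (clR p X Y Z x y z) := by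
      simp only [ent]
      have h1 : ∀ v : 𝒴 × 𝒵 × 𝒳, (∑ i, if ((e i).2.1, (e i).2.2.1, (e i).1) = v
          then clQ p X Y Z (e i).1 (e i).2.1 (e i).2.2.1 (e i).2.2.2 else 0)
          = clR p X Y Z v.2.2 v.1 v.2.1 := by
        rintro ⟨y, z, x⟩
        have h0 : (∑ i, if ((e i).2.1, (e i).2.2.1, (e i).1) = (y, z, x)
            then clQ p X Y Z (e i).1 (e i).2.1 (e i).2.2.1 (e i).2.2.2 else 0)
            = ∑ w : 𝒳 × 𝒴 × 𝒵 × 𝒵, (if (w.2.1, w.2.2.1, w.1) = (y, z, x)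
                then clQ p X Y Z w.1 w.2.1 w.2.2.1 w.2.2.2 else 0) :=
          Equiv.sum_comp e (fun w => if (w.2.1, w.2.2.1, w.1) = (y, z, x) then clQ p X Y Z w.1 w.2.1 w.2.2.1 w.2.2.2 else 0)
        rw [h0]
        have h2 : ∑ w : 𝒳 × 𝒴 × 𝒵 × 𝒵, (if (w.2.1, w.2.2.1, w.1) = (y, z, x)
            then clQ p X Y Z w.1 w.2.1 w.2.2.1 w.2.2.2 else 0)
            = ∑ z', clQ p X Y Z x y z z' := by
          simp [Fintype.sum_prod_type, Prod.ext_iff, ite_and, Finset.sum_ite_irrel,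
            Finset.sum_ite_eq, Finset.sum_ite_eq']
        rw [h2, clQ_sum_z' p X Y Z hp0]
      calc (∑ v : 𝒴 × 𝒵 × 𝒳, Real.negMulLog (∑ i, if ((e i).2.1, (e i).2.2.1, (e i).1) = v
            then clQ p X Y Z (e i).1 (e i).2.1 (e i).2.2.1 (e i).2.2.2 else 0))
          = ∑ v : 𝒴 × 𝒵 × 𝒳, Real.negMulLog (clR p X Y Z v.2.2 v.1 v.2.1) :=
            Finset.sum_congr rfl fun v _ => by rw [h1 v]
        _ = ∑ y, ∑ z, ∑ x, Real.negMulLog (clR p X Y Z x y z) := by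
            simp [Fintype.sum_prod_type]
        _ = _ := cl_sum3_comm _
    have eQ : ent (fun i => clQ p X Y Z (e i).1 (e i).2.1 (e i).2.2.1 (e i).2.2.2)
        (fun i => ((e i).2.2.2, (e i).2.1, (e i).2.2.1, (e i).1))
        = ∑ x, ∑ y, ∑ z, ∑ z', Real.negMulLog (clQ p X Y Z x y z z') := by
      simp only [ent]
      have h1 : ∀ v : 𝒵 × 𝒴 × 𝒵 × 𝒳, (∑ i, if ((e i).2.2.2, (e i).2.1, (e i).2.2.1, (e i).1) = v
          then clQ p X Y Z (e i).1 (e i).2.1 (e i).2.2.1 (e i).2.2.2 else 0)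
          = clQ p X Y Z v.2.2.2 v.2.1 v.2.2.1 v.1 := by
        rintro ⟨z', y, z, x⟩
        have h0 : (∑ i, if ((e i).2.2.2, (e i).2.1, (e i).2.2.1, (e i).1) = (z', y, z, x)
            then clQ p X Y Z (e i).1 (e i).2.1 (e i).2.2.1 (e i).2.2.2 else 0)
            = ∑ w : 𝒳 × 𝒴 × 𝒵 × 𝒵, (if (w.2.2.2, w.2.1, w.2.2.1, w.1) = (z', y, z, x)
                then clQ p X Y Z w.1 w.2.1 w.2.2.1 w.2.2.2 else 0) :=
          Equiv.sum_comp e (fun w => if (w.2.2.2, w.2.1, w.2.2.1, w.1) = (z', y, z, x) then clQ p X Y Z w.1 w.2.1 w.2.2.1 w.2.2.2 else 0)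
        rw [h0]
        simp [Fintype.sum_prod_type, Prod.ext_iff, ite_and, Finset.sum_ite_irrel,
          Finset.sum_ite_eq, Finset.sum_ite_eq']
      calc (∑ v : 𝒵 × 𝒴 × 𝒵 × 𝒳, Real.negMulLog
            (∑ i, if ((e i).2.2.2, (e i).2.1, (e i).2.2.1, (e i).1) = v
            then clQ p X Y Z (e i).1 (e i).2.1 (e i).2.2.1 (e i).2.2.2 else 0))
          = ∑ v : 𝒵 × 𝒴 × 𝒵 × 𝒳, Real.negMulLog (clQ p X Y Z v.2.2.2 v.2.1 v.2.2.1 v.1) :=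
            Finset.sum_congr rfl fun v _ => by rw [h1 v]
        _ = ∑ z', ∑ y, ∑ z, ∑ x, Real.negMulLog (clQ p X Y Z x y z z') := by
            simp [Fintype.sum_prod_type]
        _ = _ := cl_sum4_comm _
    have eA : ent (fun i => clQ p X Y Z (e i).1 (e i).2.1 (e i).2.2.1 (e i).2.2.2)
        (fun i => (e i).1) = ∑ x, Real.negMulLog (clT p X x) := by
      simp only [ent]
      refine Finset.sum_congr rfl fun x _ => ?_
      congr 1
      have h0 : (∑ i, if (e i).1 = x
          then clQ p X Y Z (e i).1 (e i).2.1 (e i).2.2.1 (e i).2.2.2 else 0)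
          = ∑ w : 𝒳 × 𝒴 × 𝒵 × 𝒵, (if w.1 = x
              then clQ p X Y Z w.1 w.2.1 w.2.2.1 w.2.2.2 else 0) :=
        Equiv.sum_comp e (fun w => if w.1 = x then clQ p X Y Z w.1 w.2.1 w.2.2.1 w.2.2.2 else 0)
      rw [h0]
      have h2 : ∑ w : 𝒳 × 𝒴 × 𝒵 × 𝒵, (if w.1 = x
          then clQ p X Y Z w.1 w.2.1 w.2.2.1 w.2.2.2 else 0)
          = ∑ y, ∑ z, ∑ z', clQ p X Y Z x y z z' := by
        simp [Fintype.sum_prod_type, Finset.sum_ite_irrel, Finset.sum_ite_eq,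
          Finset.sum_ite_eq']
      rw [h2, Finset.sum_congr rfl fun y _ => Finset.sum_congr rfl fun z _ =>
        clQ_sum_z' p X Y Z hp0 x y z, clR_marg]
    rw [eCA, eBCA, eQ, eA]
    rw [← Finset.sum_add_distrib, ← Finset.sum_sub_distrib, ← Finset.sum_sub_distrib]
    refine Finset.sum_eq_zero fun x _ => ?_
    have := clQ_ent p X Y Z hp0 x
    linarith
end

section
/- (Copy Lemma for pairs) For every tuple of jointly distributed random variables (A_1,A_2,B_1,B_2,C_1,C_2) taking finitely many values, there exists an extension to jointly distributed random variables (A_1,A_2,B_1,B_2,C_1,C_2,C_1',C_2') such that: the quadruple (A_1,A_2,C_1',C_2') has the same joint distribution as (A_1,A_2,C_1,C_2); and I(C_1',C_2'; B_1,B_2,C_1,C_2 | A_1,A_2) = 0. -/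
open scoped Classical

section Aux
open Real Finset

variable {Ω α δ τ σ : Type*} [Fintype Ω] [Fintype α] [Fintype δ] [Fintype τ] [Fintype σ]

lemma ent_eq (p : Ω → ℝ) (X : Ω → α) : ent p X = ∑ a : α, Real.negMulLog (distOf p X a) := rfl

lemma distOf_nonneg {p : Ω → ℝ} (hp0 : ∀ ω, 0 ≤ p ω) (X : Ω → α) (a : α) :
    0 ≤ distOf p X a := by
  unfold distOf
  exact Finset.sum_nonneg fun ω _ => by split <;> simp [hp0 ω]

lemma distOf_pair_sum (p : Ω → ℝ) (A : Ω → α) (C : Ω → δ) (a : α) :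
    ∑ d : δ, distOf p (fun ω => (A ω, C ω)) (a, d) = distOf p A a := by
  unfold distOf
  rw [Finset.sum_comm]
  refine Finset.sum_congr rfl fun ω _ => ?_
  by_cases h : A ω = a
  · simp [h, Prod.ext_iff, Finset.sum_ite_eq' Finset.univ (C ω) (fun _ => p ω)]
  · simp [h, Prod.ext_iff]

lemma distOf_pair_le {p : Ω → ℝ} (hp0 : ∀ ω, 0 ≤ p ω) (A : Ω → α) (C : Ω → δ)
    (a : α) (d : δ) : distOf p (fun ω => (A ω, C ω)) (a, d) ≤ distOf p A a := by
  unfold distOf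
  refine Finset.sum_le_sum fun ω _ => ?_
  by_cases h : A ω = a
  · by_cases h2 : C ω = d <;> simp [h, h2, Prod.ext_iff, hp0 ω]
  · simp [h, Prod.ext_iff]

/-- Conditional distribution of `C` given `A = a` (a point mass at `d₀` when `P(A=a)=0`). -/
noncomputable def condP (p : Ω → ℝ) (A : Ω → α) (C : Ω → δ) (d₀ : δ) (a : α) (d : δ) : ℝ :=
  if 0 < distOf p A a then distOf p (fun ω => (A ω, C ω)) (a, d) / distOf p A a
  else if d = d₀ then 1 else 0

lemma condP_nonneg {p : Ω → ℝ} (hp0 : ∀ ω, 0 ≤ p ω) (A : Ω → α) (C : Ω → δ)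
    (d₀ : δ) (a : α) (d : δ) : 0 ≤ condP p A C d₀ a d := by
  unfold condP
  split
  · exact div_nonneg (distOf_nonneg hp0 _ _) (le_of_lt (by assumption))
  · split <;> norm_num

lemma sum_condP (p : Ω → ℝ) (A : Ω → α) (C : Ω → δ) (d₀ : δ) (a : α) :
    ∑ d : δ, condP p A C d₀ a d = 1 := by
  by_cases h : 0 < distOf p A a
  · simp only [condP, if_pos h]
    rw [← Finset.sum_div, distOf_pair_sum, div_self h.ne']
  · simp only [condP, if_neg h]
    simp [Finset.sum_ite_eq' Finset.univ d₀ (fun _ => (1:ℝ))]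

lemma distOf_mul_condP {p : Ω → ℝ} (hp0 : ∀ ω, 0 ≤ p ω) (A : Ω → α) (C : Ω → δ)
    (d₀ : δ) (a : α) (d : δ) :
    distOf p A a * condP p A C d₀ a d = distOf p (fun ω => (A ω, C ω)) (a, d) := by
  unfold condP
  by_cases h : 0 < distOf p A a
  · rw [if_pos h, mul_comm, div_mul_cancel₀ _ h.ne']
  · have hA : distOf p A a = 0 := le_antisymm (not_lt.mp h) (distOf_nonneg hp0 _ _)
    have hAC : distOf p (fun ω => (A ω, C ω)) (a, d) = 0 :=
      le_antisymm (hA ▸ distOf_pair_le hp0 A C a d) (distOf_nonneg hp0 _ _)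
    rw [if_neg h, hA, hAC, zero_mul]

variable (p : Ω → ℝ) (A : Ω → α) (C : Ω → δ) (d₀ : δ)

/-- The extended measure on `Ω × δ`. -/
noncomputable def extQ : Ω × δ → ℝ := fun x => p x.1 * condP p A C d₀ (A x.1) x.2

lemma extQ_nonneg (hp0 : ∀ ω, 0 ≤ p ω) (x : Ω × δ) : 0 ≤ extQ p A C d₀ x :=
  mul_nonneg (hp0 _) (condP_nonneg hp0 _ _ _ _ _)

lemma extQ_marg (F : Ω → τ) (v : τ) :
    distOf (extQ p A C d₀) (fun x => F x.1) v = distOf p F v := by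
  unfold distOf extQ
  rw [Fintype.sum_prod_type]
  refine Finset.sum_congr rfl fun ω _ => ?_
  by_cases h : F ω = v
  · simp only [h, if_true, ← Finset.mul_sum, sum_condP, mul_one]
  · simp [h]

lemma extQ_ent_marg (F : Ω → τ) : ent (extQ p A C d₀) (fun x => F x.1) = ent p F := by
  rw [ent_eq, ent_eq]
  exact Finset.sum_congr rfl fun v _ => by rw [extQ_marg]

lemma extQ_sum (hp1 : ∑ ω, p ω = 1) : ∑ x, extQ p A C d₀ x = 1 := by
  unfold extQ
  rw [Fintype.sum_prod_type]
  simp only [← Finset.mul_sum, sum_condP, mul_one]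
  exact hp1

lemma extQ_joint (F : Ω → τ) (pr : τ → α) (hpr : ∀ ω, A ω = pr (F ω)) (d : δ) (t : τ) :
    distOf (extQ p A C d₀) (fun x => (x.2, F x.1)) (d, t)
      = distOf p F t * condP p A C d₀ (pr t) d := by
  unfold distOf extQ
  rw [Fintype.sum_prod_type]
  have key : ∀ ω : Ω, (∑ c : δ, if ((c, F ω) : δ × τ) = (d, t)
        then p ω * condP p A C d₀ (A ω) c else 0)
      = if F ω = t then p ω * condP p A C d₀ (pr t) d else 0 := by
    intro ω
    by_cases h : F ω = t
    · simp only [Prod.mk.injEq, h, and_true]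
      rw [Finset.sum_ite_eq' Finset.univ d (fun c => p ω * condP p A C d₀ (A ω) c)]
      simp [hpr ω, h]
    · simp [Prod.mk.injEq, h]
  simp only [key]
  rw [Finset.sum_mul]
  exact Finset.sum_congr rfl fun ω _ => by rw [ite_mul, zero_mul]

lemma extQ_AC {p : Ω → ℝ} (hp0 : ∀ ω, 0 ≤ p ω) (A : Ω → α) (C : Ω → δ) (d₀ : δ)
    (w : α × δ) :
    distOf (extQ p A C d₀) (fun x => (A x.1, x.2)) w
      = distOf p (fun ω => (A ω, C ω)) w := by
  obtain ⟨a, d⟩ := w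
  rw [← distOf_mul_condP hp0 A C d₀ a d]
  unfold distOf extQ
  rw [Fintype.sum_prod_type]
  have key : ∀ ω : Ω, (∑ c : δ, if ((A ω, c) : α × δ) = (a, d)
        then p ω * condP p A C d₀ (A ω) c else 0)
      = if A ω = a then p ω * condP p A C d₀ a d else 0 := by
    intro ω
    by_cases h : A ω = a
    · simp only [Prod.mk.injEq, h, true_and]
      rw [Finset.sum_ite_eq' Finset.univ d (fun c => p ω * condP p A C d₀ a c)]
      simp [h]
    · simp [Prod.mk.injEq, h]
  simp only [key]
  rw [Finset.sum_mul]
  exact Finset.sum_congr rfl fun ω _ => by rw [ite_mul, zero_mul]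

lemma sum_distOf_mul (F : Ω → τ) (pr : τ → α) (hpr : ∀ ω, A ω = pr (F ω)) (g : α → ℝ) :
    ∑ t : τ, distOf p F t * g (pr t) = ∑ ω : Ω, p ω * g (A ω) := by
  unfold distOf
  simp only [Finset.sum_mul]
  rw [Finset.sum_comm]
  refine Finset.sum_congr rfl fun ω _ => ?_
  have key : ∀ t : τ, (if F ω = t then p ω else 0) * g (pr t)
      = if F ω = t then p ω * g (pr t) else 0 := fun t => by rw [ite_mul, zero_mul]
  simp only [key]
  rw [Finset.sum_ite_eq Finset.univ (F ω) (fun t => p ω * g (pr t))]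
  simp [hpr ω]

lemma extQ_ent (F : Ω → τ) (pr : τ → α) (hpr : ∀ ω, A ω = pr (F ω)) :
    ent (extQ p A C d₀) (fun x => (x.2, F x.1))
      = ent p F + ∑ ω, p ω * (∑ d, Real.negMulLog (condP p A C d₀ (A ω) d)) := by
  rw [ent_eq, ent_eq, Fintype.sum_prod_type, Finset.sum_comm]
  have key : ∀ t d, distOf (extQ p A C d₀) (fun x => (x.2, F x.1)) (d, t)
      = distOf p F t * condP p A C d₀ (pr t) d := fun t d => extQ_joint p A C d₀ F pr hpr d t
  simp only [key, Real.negMulLog_mul]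
  have step : ∀ t : τ, (∑ d, (condP p A C d₀ (pr t) d * Real.negMulLog (distOf p F t)
        + distOf p F t * Real.negMulLog (condP p A C d₀ (pr t) d)))
      = Real.negMulLog (distOf p F t)
        + distOf p F t * (∑ d, Real.negMulLog (condP p A C d₀ (pr t) d)) := by
    intro t
    rw [Finset.sum_add_distrib, ← Finset.sum_mul, sum_condP, one_mul, ← Finset.mul_sum]
  simp only [step]
  rw [Finset.sum_add_distrib]
  congr 1
  exact sum_distOf_mul p A F pr hpr (fun a => ∑ d, Real.negMulLog (condP p A C d₀ a d))

lemma distOf_reindex (p : Ω → ℝ) (e : σ ≃ Ω) (X : Ω → α) (v : α) :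
    distOf (fun i => p (e i)) (fun i => X (e i)) v = distOf p X v :=
  Fintype.sum_equiv e _ _ fun i => rfl

lemma ent_reindex (p : Ω → ℝ) (e : σ ≃ Ω) (X : Ω → α) :
    ent (fun i => p (e i)) (fun i => X (e i)) = ent p X := by
  rw [ent_eq, ent_eq]
  exact Finset.sum_congr rfl fun a _ => by rw [← distOf_reindex p e X a]

lemma distOf_map_equiv (p : Ω → ℝ) (g : α ≃ τ) (X : Ω → α) (v : α) :
    distOf p (fun ω => g (X ω)) (g v) = distOf p X v := by
  unfold distOf
  exact Finset.sum_congr rfl fun ω _ => by simp [Equiv.apply_eq_iff_eq]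

lemma ent_map_equiv (p : Ω → ℝ) (g : α ≃ τ) (X : Ω → α) :
    ent p (fun ω => g (X ω)) = ent p X := by
  rw [ent_eq, ent_eq]
  exact (Fintype.sum_equiv g _ _ fun a => by rw [distOf_map_equiv]).symm

end Aux

set_option linter.unusedVariables false

/-- **Copy Lemma for pairs.** Every tuple of jointly distributed random variables
`(A₁,A₂,B₁,B₂,C₁,C₂)` taking finitely many values can be extended to a jointly distributed
tuple `(A₁,A₂,B₁,B₂,C₁,C₂,C₁',C₂')` such that `(A₁,A₂,C₁',C₂')` has the same joint
distribution as `(A₁,A₂,C₁,C₂)` and `I(C₁',C₂'; B₁,B₂,C₁,C₂ | A₁,A₂) = 0`. -/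
theorem copy_lemma_pairs
    {Ω α₁ α₂ β₁ β₂ γ₁ γ₂ : Type*} [Fintype Ω]
    [Fintype α₁] [Fintype α₂] [Fintype β₁] [Fintype β₂] [Fintype γ₁] [Fintype γ₂]
    (p : Ω → ℝ) (hp0 : ∀ ω, 0 ≤ p ω) (hp1 : ∑ ω, p ω = 1)
    (A₁ : Ω → α₁) (A₂ : Ω → α₂) (B₁ : Ω → β₁) (B₂ : Ω → β₂) (C₁ : Ω → γ₁) (C₂ : Ω → γ₂) :
    ∃ (m : ℕ) (q : Fin m → ℝ), (∀ ω, 0 ≤ q ω) ∧ (∑ ω, q ω = 1) ∧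
      ∃ (A₁' : Fin m → α₁) (A₂' : Fin m → α₂) (B₁' : Fin m → β₁) (B₂' : Fin m → β₂)
        (C₁' : Fin m → γ₁) (C₂' : Fin m → γ₂) (D₁ : Fin m → γ₁) (D₂ : Fin m → γ₂),
        -- the new tuple extends the original one: the first six variables have the same
        -- joint distribution as `(A₁,A₂,B₁,B₂,C₁,C₂)`
        (∀ v : α₁ × α₂ × β₁ × β₂ × γ₁ × γ₂,
          distOf q (fun ω => (A₁' ω, A₂' ω, B₁' ω, B₂' ω, C₁' ω, C₂' ω)) v
            = distOf p (fun ω => (A₁ ω, A₂ ω, B₁ ω, B₂ ω, C₁ ω, C₂ ω)) v) ∧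
        -- `(A₁,A₂,D₁,D₂)` is distributed like `(A₁,A₂,C₁,C₂)`
        (∀ v : α₁ × α₂ × γ₁ × γ₂,
          distOf q (fun ω => (A₁' ω, A₂' ω, D₁ ω, D₂ ω)) v
            = distOf q (fun ω => (A₁' ω, A₂' ω, C₁' ω, C₂' ω)) v) ∧
        -- `I(D₁,D₂ ; B₁,B₂,C₁,C₂ | A₁,A₂) = 0`
        ent q (fun ω => (D₁ ω, D₂ ω, A₁' ω, A₂' ω))
          + ent q (fun ω => (B₁' ω, B₂' ω, C₁' ω, C₂' ω, A₁' ω, A₂' ω))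
          - ent q (fun ω => (D₁ ω, D₂ ω, B₁' ω, B₂' ω, C₁' ω, C₂' ω, A₁' ω, A₂' ω))
          - ent q (fun ω => (A₁' ω, A₂' ω)) = 0 := by
  classical
  have hΩ : Nonempty Ω := by
    by_contra h
    rw [not_nonempty_iff] at h
    have h0 : ∑ ω : Ω, p ω = 0 := Finset.sum_eq_zero fun ω _ => h.elim ω
    rw [h0] at hp1
    norm_num at hp1
  obtain ⟨ω₀⟩ := hΩ
  set A : Ω → α₁ × α₂ := fun ω => (A₁ ω, A₂ ω) with hA
  set Cc : Ω → γ₁ × γ₂ := fun ω => (C₁ ω, C₂ ω) with hCc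
  set d₀ : γ₁ × γ₂ := (C₁ ω₀, C₂ ω₀) with hd₀
  set m := Fintype.card (Ω × (γ₁ × γ₂)) with hm
  set e : Fin m ≃ Ω × (γ₁ × γ₂) := (Fintype.equivFin (Ω × (γ₁ × γ₂))).symm with he
  refine ⟨m, fun i => extQ p A Cc d₀ (e i),
    fun i => extQ_nonneg p A Cc d₀ hp0 (e i), ?_,
    fun i => A₁ (e i).1, fun i => A₂ (e i).1, fun i => B₁ (e i).1, fun i => B₂ (e i).1,
    fun i => C₁ (e i).1, fun i => C₂ (e i).1, fun i => (e i).2.1, fun i => (e i).2.2,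
    ?_, ?_, ?_⟩
  · -- total mass
    rw [Fintype.sum_equiv e _ (extQ p A Cc d₀) fun i => rfl]
    exact extQ_sum p A Cc d₀ hp1
  · -- first condition: marginal of the six-tuple
    intro v
    show distOf (fun i => extQ p A Cc d₀ (e i))
        (fun i => (A₁ (e i).1, A₂ (e i).1, B₁ (e i).1, B₂ (e i).1, C₁ (e i).1, C₂ (e i).1)) v
      = distOf p (fun ω => (A₁ ω, A₂ ω, B₁ ω, B₂ ω, C₁ ω, C₂ ω)) v
    rw [distOf_reindex (extQ p A Cc d₀) e
      (fun x => (A₁ x.1, A₂ x.1, B₁ x.1, B₂ x.1, C₁ x.1, C₂ x.1)) v]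
    exact extQ_marg p A Cc d₀ (fun ω => (A₁ ω, A₂ ω, B₁ ω, B₂ ω, C₁ ω, C₂ ω)) v
  · -- second condition: (A, D) has the distribution of (A, C)
    intro v
    show distOf (fun i => extQ p A Cc d₀ (e i))
        (fun i => (A₁ (e i).1, A₂ (e i).1, (e i).2.1, (e i).2.2)) v
      = distOf (fun i => extQ p A Cc d₀ (e i))
        (fun i => (A₁ (e i).1, A₂ (e i).1, C₁ (e i).1, C₂ (e i).1)) v
    set g : ((α₁ × α₂) × (γ₁ × γ₂)) ≃ (α₁ × α₂ × γ₁ × γ₂) := Equiv.prodAssoc α₁ α₂ (γ₁ × γ₂)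
    have hv : v = g (g.symm v) := (g.apply_symm_apply v).symm
    rw [distOf_reindex (extQ p A Cc d₀) e (fun x => (A₁ x.1, A₂ x.1, x.2.1, x.2.2)) v,
        distOf_reindex (extQ p A Cc d₀) e (fun x => (A₁ x.1, A₂ x.1, C₁ x.1, C₂ x.1)) v]
    calc distOf (extQ p A Cc d₀) (fun x => (A₁ x.1, A₂ x.1, x.2.1, x.2.2)) v
        = distOf (extQ p A Cc d₀) (fun x => g (A x.1, x.2)) (g (g.symm v)) := by
          rw [← hv]; rfl
      _ = distOf (extQ p A Cc d₀) (fun x => (A x.1, x.2)) (g.symm v) :=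
          distOf_map_equiv _ g _ _
      _ = distOf p (fun ω => (A ω, Cc ω)) (g.symm v) := extQ_AC hp0 A Cc d₀ _
      _ = distOf (extQ p A Cc d₀) (fun x => (A x.1, Cc x.1)) (g.symm v) :=
          (extQ_marg p A Cc d₀ (fun ω => (A ω, Cc ω)) _).symm
      _ = distOf (extQ p A Cc d₀) (fun x => g (A x.1, Cc x.1)) (g (g.symm v)) :=
          (distOf_map_equiv _ g _ _).symm
      _ = distOf (extQ p A Cc d₀) (fun x => (A₁ x.1, A₂ x.1, C₁ x.1, C₂ x.1)) v := by
          rw [← hv]; rfl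
  · -- third condition: vanishing conditional mutual information
    set S : ℝ := ∑ ω, p ω * (∑ d, Real.negMulLog (condP p A Cc d₀ (A ω) d)) with hS
    have h1 : ent (fun i => extQ p A Cc d₀ (e i))
        (fun i => ((e i).2.1, (e i).2.2, A₁ (e i).1, A₂ (e i).1))
        = ent p A + S := by
      rw [ent_reindex (extQ p A Cc d₀) e (fun x => (x.2.1, x.2.2, A₁ x.1, A₂ x.1))]
      have hg := ent_map_equiv (extQ p A Cc d₀)
        (Equiv.prodAssoc γ₁ γ₂ (α₁ × α₂)) (fun x => (x.2, A x.1))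
      calc ent (extQ p A Cc d₀) (fun x => (x.2.1, x.2.2, A₁ x.1, A₂ x.1))
          = ent (extQ p A Cc d₀) (fun x => (x.2, A x.1)) := hg
        _ = ent p A + S := extQ_ent p A Cc d₀ A id fun ω => rfl
    have h2 : ent (fun i => extQ p A Cc d₀ (e i))
        (fun i => (B₁ (e i).1, B₂ (e i).1, C₁ (e i).1, C₂ (e i).1, A₁ (e i).1, A₂ (e i).1))
        = ent p (fun ω => (B₁ ω, B₂ ω, C₁ ω, C₂ ω, A₁ ω, A₂ ω)) := by
      rw [ent_reindex (extQ p A Cc d₀) e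
        (fun x => (B₁ x.1, B₂ x.1, C₁ x.1, C₂ x.1, A₁ x.1, A₂ x.1))]
      exact extQ_ent_marg p A Cc d₀ (fun ω => (B₁ ω, B₂ ω, C₁ ω, C₂ ω, A₁ ω, A₂ ω))
    have h3 : ent (fun i => extQ p A Cc d₀ (e i))
        (fun i => ((e i).2.1, (e i).2.2, B₁ (e i).1, B₂ (e i).1, C₁ (e i).1, C₂ (e i).1,
          A₁ (e i).1, A₂ (e i).1))
        = ent p (fun ω => (B₁ ω, B₂ ω, C₁ ω, C₂ ω, A₁ ω, A₂ ω)) + S := by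
      rw [ent_reindex (extQ p A Cc d₀) e
        (fun x => (x.2.1, x.2.2, B₁ x.1, B₂ x.1, C₁ x.1, C₂ x.1, A₁ x.1, A₂ x.1))]
      have hg := ent_map_equiv (extQ p A Cc d₀)
        (Equiv.prodAssoc γ₁ γ₂ (β₁ × β₂ × γ₁ × γ₂ × α₁ × α₂))
        (fun x => (x.2, (B₁ x.1, B₂ x.1, C₁ x.1, C₂ x.1, A₁ x.1, A₂ x.1)))
      calc ent (extQ p A Cc d₀)
            (fun x => (x.2.1, x.2.2, B₁ x.1, B₂ x.1, C₁ x.1, C₂ x.1, A₁ x.1, A₂ x.1))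
          = ent (extQ p A Cc d₀)
            (fun x => (x.2, (B₁ x.1, B₂ x.1, C₁ x.1, C₂ x.1, A₁ x.1, A₂ x.1))) := hg
        _ = ent p (fun ω => (B₁ ω, B₂ ω, C₁ ω, C₂ ω, A₁ ω, A₂ ω)) + S :=
            extQ_ent p A Cc d₀ (fun ω => (B₁ ω, B₂ ω, C₁ ω, C₂ ω, A₁ ω, A₂ ω))
              (fun t => t.2.2.2.2) fun ω => rfl
    have h4 : ent (fun i => extQ p A Cc d₀ (e i))
        (fun i => (A₁ (e i).1, A₂ (e i).1)) = ent p A := by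
      rw [ent_reindex (extQ p A Cc d₀) e (fun x => (A₁ x.1, A₂ x.1))]
      exact extQ_ent_marg p A Cc d₀ A
    show ent (fun i => extQ p A Cc d₀ (e i))
          (fun i => ((e i).2.1, (e i).2.2, A₁ (e i).1, A₂ (e i).1))
        + ent (fun i => extQ p A Cc d₀ (e i))
          (fun i => (B₁ (e i).1, B₂ (e i).1, C₁ (e i).1, C₂ (e i).1, A₁ (e i).1, A₂ (e i).1))
        - ent (fun i => extQ p A Cc d₀ (e i))
          (fun i => ((e i).2.1, (e i).2.2, B₁ (e i).1, B₂ (e i).1, C₁ (e i).1, C₂ (e i).1,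
            A₁ (e i).1, A₂ (e i).1))
        - ent (fun i => extQ p A Cc d₀ (e i))
          (fun i => (A₁ (e i).1, A₂ (e i).1)) = 0
    rw [h1, h2, h3, h4]
    ring
end
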